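/- arXiv:0808.3048 — 3 statements merged into one kernel-verified Lean document; each statement's English description precedes it below -/
import Mathlib

section
/- Let β₂ > 0 and β₃ be real numbers, and define m = (β₃ + √(β₃² + β₂³/2))/β₂, m' = −β₂/(2m), and t = β₂³ / (2β₂³ + 4β₃(β₃ + √(β₃² + β₂³/2))). Let Z and B be independent real random variables such that Z has the Gaussian distribution N(0, β₂/2) and B satisfies P(B = m) = t and P(B = m') = 1 − t. Then G = Z + B satisfies E(G) = 0, E(G²) = β₂ and E(G³) = β₃. -/
open MeasureTheory ProbabilityTheory Filter Real Topology
open scoped ENNReal NNReal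

lemma aux_tendsto_mul_exp_atTop {b : ℝ} (hb : 0 < b) :
    Tendsto (fun x : ℝ => x * rexp (-b * x ^ 2)) atTop (𝓝 0) := by
  have hg : Tendsto (fun x : ℝ => rexp (-(1/2) * x)) atTop (𝓝 0) :=
    Real.tendsto_exp_atBot.comp
      ((tendsto_const_mul_atBot_of_neg (by norm_num)).mpr tendsto_id)
  have h := (rpow_mul_exp_neg_mul_sq_isLittleO_exp_neg hb 1).tendsto_zero_of_tendsto hg
  refine h.congr' ?_
  filter_upwards [eventually_ge_atTop (0:ℝ)] with x hx
  rw [Real.rpow_one]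

lemma aux_integral_sq_mul_exp {b : ℝ} (hb : 0 < b) :
    ∫ x : ℝ, x ^ 2 * rexp (-b * x ^ 2) = Real.sqrt (π / b) / (2 * b) := by
  set F : ℝ → ℝ := fun x => -(x * rexp (-b * x ^ 2)) / (2 * b) with hFdef
  have hF : ∀ x : ℝ, HasDerivAt F (x ^ 2 * rexp (-b * x ^ 2) - rexp (-b * x ^ 2) / (2 * b)) x := by
    intro x
    have h1 : HasDerivAt (fun x : ℝ => -b * x ^ 2) (-b * (2 * x)) x := by
      simpa using ((hasDerivAt_pow 2 x).const_mul (-b))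
    have h2 : HasDerivAt (fun x : ℝ => rexp (-b * x ^ 2)) (rexp (-b * x ^ 2) * (-b * (2 * x))) x :=
      h1.exp
    have h3 : HasDerivAt (fun x : ℝ => x * rexp (-b * x ^ 2))
        (1 * rexp (-b * x ^ 2) + x * (rexp (-b * x ^ 2) * (-b * (2 * x)))) x :=
      (hasDerivAt_id x).mul h2
    have h4 := (h3.neg).div_const (2 * b)
    refine h4.congr_deriv ?_
    rw [eq_sub_iff_add_eq, ← add_div, div_eq_iff (by positivity)]
    ring
  have hInt2 : Integrable (fun x : ℝ => x ^ 2 * rexp (-b * x ^ 2)) := by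
    have h := integrable_rpow_mul_exp_neg_mul_sq hb (s := ((2:ℕ):ℝ)) (by norm_num)
    exact h.congr (Filter.Eventually.of_forall fun x => by
      norm_num [Real.rpow_natCast])
  have hInt1 : Integrable (fun x : ℝ => rexp (-b * x ^ 2) / (2 * b)) :=
    (integrable_exp_neg_mul_sq hb).div_const _
  have htop : Tendsto F atTop (𝓝 0) := by
    have h := ((aux_tendsto_mul_exp_atTop hb).neg).div_const (2 * b)
    simp only [neg_zero, zero_div] at h
    exact h
  have hbot : Tendsto F atBot (𝓝 0) := by
    have h := ((aux_tendsto_mul_exp_atTop hb).div_const (2 * b)).comp tendsto_neg_atBot_atTop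
    simp only [Function.comp_def, zero_div] at h
    refine Tendsto.congr (fun x => ?_) h
    show -x * rexp (-b * (-x) ^ 2) / (2 * b) = F x
    rw [neg_sq]
    simp only [hFdef]
    ring
  have h0 : ∫ x : ℝ, (x ^ 2 * rexp (-b * x ^ 2) - rexp (-b * x ^ 2) / (2 * b)) = 0 - 0 :=
    integral_of_hasDerivAt_of_tendsto hF (hInt2.sub hInt1) hbot htop
  rw [integral_sub hInt2 hInt1, integral_div, integral_gaussian] at h0
  linarith

lemma aux_integral_odd_pow_mul_exp (b : ℝ) {n : ℕ} (hn : Odd n) :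
    ∫ x : ℝ, x ^ n * rexp (-b * x ^ 2) = 0 := by
  have h := MeasureTheory.integral_neg_eq_self (fun x : ℝ => x ^ n * rexp (-b * x ^ 2)) volume
  have heq : ∀ x : ℝ, (-x) ^ n * rexp (-b * (-x) ^ 2) = -(x ^ n * rexp (-b * x ^ 2)) := by
    intro x
    rw [hn.neg_pow, neg_sq]; ring
  simp only [heq, integral_neg] at h
  linarith

lemma aux_gaussianReal_pow (vr : ℝ) (hvr : 0 < vr) (n : ℕ) :
    (∫ x, x ^ n ∂(gaussianReal 0 vr.toNNReal)
      = (Real.sqrt (2 * π * vr))⁻¹ * ∫ x : ℝ, x ^ n * rexp (-(2*vr)⁻¹ * x ^ 2))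
    ∧ Integrable (fun x => x ^ n) (gaussianReal 0 vr.toNNReal) := by
  have hv0 : vr.toNNReal ≠ 0 := by simp [Real.toNNReal_eq_zero, hvr, not_le]
  have hcoe : ((vr.toNNReal : ℝ)) = vr := Real.coe_toNNReal vr hvr.le
  have hpdf : ∀ x : ℝ, gaussianPDFReal 0 vr.toNNReal x
      = (Real.sqrt (2 * π * vr))⁻¹ * rexp (-(2*vr)⁻¹ * x ^ 2) := by
    intro x
    rw [gaussianPDFReal]
    rw [hcoe]
    congr 1
    rw [sub_zero]
    congr 1
    field_simp
  have hmeas : Measurable fun x => (gaussianPDFReal 0 vr.toNNReal x).toNNReal :=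
    (measurable_gaussianPDFReal 0 vr.toNNReal).real_toNNReal
  have hwd : gaussianReal 0 vr.toNNReal
      = volume.withDensity (fun x => ((gaussianPDFReal 0 vr.toNNReal x).toNNReal : ℝ≥0∞)) := by
    rw [gaussianReal_of_var_ne_zero _ hv0, gaussianPDF_def]
    rfl
  have hsmul : ∀ x : ℝ, (gaussianPDFReal 0 vr.toNNReal x).toNNReal • (x ^ n)
      = (Real.sqrt (2 * π * vr))⁻¹ * (x ^ n * rexp (-(2*vr)⁻¹ * x ^ 2)) := by
    intro x
    rw [NNReal.smul_def, smul_eq_mul, Real.coe_toNNReal _ (gaussianPDFReal_nonneg _ _ _), hpdf]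
    ring
  have hIntExp : Integrable (fun x : ℝ => x ^ n * rexp (-(2*vr)⁻¹ * x ^ 2)) := by
    have h := integrable_rpow_mul_exp_neg_mul_sq (b := (2*vr)⁻¹) (by positivity)
      (s := ((n:ℕ):ℝ)) (lt_of_lt_of_le neg_one_lt_zero (Nat.cast_nonneg n))
    exact h.congr (Filter.Eventually.of_forall fun x => by norm_num [Real.rpow_natCast])
  constructor
  · rw [hwd, integral_withDensity_eq_integral_smul hmeas]
    simp_rw [hsmul]
    rw [integral_const_mul]
  · rw [hwd, integrable_withDensity_iff_integrable_smul hmeas]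
    refine Integrable.congr (hIntExp.const_mul ((Real.sqrt (2 * π * vr))⁻¹)) ?_
    exact Filter.Eventually.of_forall fun x => (hsmul x).symm

lemma aux_gaussianReal_moments (vr : ℝ) (hvr : 0 < vr) :
    (∫ x, x ^ 1 ∂(gaussianReal 0 vr.toNNReal) = 0) ∧
    (∫ x, x ^ 2 ∂(gaussianReal 0 vr.toNNReal) = vr) ∧
    (∫ x, x ^ 3 ∂(gaussianReal 0 vr.toNNReal) = 0) := by
  have hb : (0:ℝ) < (2*vr)⁻¹ := by positivity
  refine ⟨?_, ?_, ?_⟩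
  · rw [(aux_gaussianReal_pow vr hvr 1).1, aux_integral_odd_pow_mul_exp _ odd_one, mul_zero]
  · rw [(aux_gaussianReal_pow vr hvr 2).1, aux_integral_sq_mul_exp hb]
    have h1 : π / (2*vr)⁻¹ = 2 * π * vr := by field_simp
    have h2 : (0:ℝ) < Real.sqrt (2 * π * vr) := Real.sqrt_pos.mpr (by positivity)
    rw [h1]
    rw [div_eq_mul_inv, ← mul_assoc, inv_mul_cancel₀ h2.ne', one_mul]
    rw [mul_inv, inv_inv]
    field_simp
  · rw [(aux_gaussianReal_pow vr hvr 3).1, aux_integral_odd_pow_mul_exp _ ⟨1, by norm_num⟩, mul_zero]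

/-- **A Gaussian-plus-two-point distribution with prescribed first three moments**
(Dedecker–Rio, Lemma 4.1). -/
theorem stmt_12
    (β₂ β₃ : ℝ) (hβ₂ : 0 < β₂)
    (m m' t : ℝ)
    (hm : m = (β₃ + Real.sqrt (β₃ ^ 2 + β₂ ^ 3 / 2)) / β₂)
    (hm' : m' = -β₂ / (2 * m))
    (ht : t = β₂ ^ 3 / (2 * β₂ ^ 3 + 4 * β₃ * (β₃ + Real.sqrt (β₃ ^ 2 + β₂ ^ 3 / 2))))
    {Ω : Type*} {mΩ : MeasurableSpace Ω} (P : Measure Ω) [IsProbabilityMeasure P]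
    (Z B : Ω → ℝ) (hZmeas : Measurable Z) (hBmeas : Measurable B)
    (hindep : IndepFun Z B P)
    (hZlaw : Measure.map Z P = gaussianReal 0 (Real.toNNReal (β₂ / 2)))
    (hBm : P {ω | B ω = m} = ENNReal.ofReal t)
    (hBm' : P {ω | B ω = m'} = ENNReal.ofReal (1 - t)) :
    (∫ ω, (Z ω + B ω) ∂P) = 0 ∧
    (∫ ω, (Z ω + B ω) ^ 2 ∂P) = β₂ ∧
    (∫ ω, (Z ω + B ω) ^ 3 ∂P) = β₃ := by
  -- algebraic setup
  set s : ℝ := Real.sqrt (β₃ ^ 2 + β₂ ^ 3 / 2) with hs_def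
  have hs : s ^ 2 = β₃ ^ 2 + β₂ ^ 3 / 2 := Real.sq_sqrt (by positivity)
  have hs_nonneg : 0 ≤ s := Real.sqrt_nonneg _
  have hβ₃s : 0 < β₃ + s := by
    nlinarith [hs, hs_nonneg, pow_pos hβ₂ 3]
  have hm_pos : 0 < m := by rw [hm]; exact div_pos hβ₃s hβ₂
  have hβ₂m : β₂ * m = β₃ + s := by
    rw [hm]; field_simp
  have h2 : (β₂ * m) ^ 2 = (β₃ + s) ^ 2 := by rw [hβ₂m]
  have hquad : β₂ * m ^ 2 = 2 * β₃ * m + β₂ ^ 2 / 2 := by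
    have key : β₂ * (β₂ * m ^ 2) = β₂ * (2 * β₃ * m + β₂ ^ 2 / 2) := by
      linear_combination h2 + hs - 2 * β₃ * hβ₂m
    exact mul_left_cancel₀ hβ₂.ne' key
  have hq_pos : 0 < β₂ + 2 * m ^ 2 := by positivity
  have hD : 2 * β₂ ^ 3 + 4 * β₃ * (β₃ + s) = β₂ ^ 2 * (β₂ + 2 * m ^ 2) := by
    linear_combination -2 * h2 - 2 * hs
  have ht2 : t = β₂ / (β₂ + 2 * m ^ 2) := by
    rw [ht, hD]
    rw [div_eq_div_iff (by positivity) hq_pos.ne']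
    ring
  have ht_nonneg : 0 ≤ t := by rw [ht2]; positivity
  have ht_le : t ≤ 1 := by
    rw [ht2, div_le_one hq_pos]; nlinarith [sq_nonneg m]
  have hm'_neg : m' < 0 := by
    rw [hm']; 
    apply div_neg_of_neg_of_pos (by linarith) (by linarith)
  have hne : m ≠ m' := by linarith
  -- the two events
  set A : Set Ω := {ω | B ω = m} with hA_def
  set A' : Set Ω := {ω | B ω = m'} with hA'_def
  have hA : MeasurableSet A := hBmeas (measurableSet_singleton m)
  have hA' : MeasurableSet A' := hBmeas (measurableSet_singleton m')
  have hdisj : Disjoint A A' := by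
    rw [Set.disjoint_left]
    intro ω hω hω'
    exact hne (hω.symm.trans hω')
  have hunion : P (A ∪ A') = 1 := by
    rw [measure_union hdisj hA', hBm, hBm', ← ENNReal.ofReal_add ht_nonneg (by linarith)]
    norm_num
  have hae : ∀ᵐ ω ∂P, B ω = m ∨ B ω = m' := by
    have hc : P (A ∪ A')ᶜ = 0 := by
      rw [measure_compl (hA.union hA') (measure_ne_top _ _), hunion, measure_univ, tsub_self]
    rw [ae_iff]
    refine measure_mono_null ?_ hc
    intro ω hω
    simp only [Set.mem_setOf_eq, not_or] at hω
    simp only [Set.mem_compl_iff, Set.mem_union, hA_def, hA'_def, Set.mem_setOf_eq, not_or]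
    exact hω
  -- moments of B
  have hBint : ∀ n : ℕ, Integrable (fun ω => B ω ^ n) P := by
    intro n
    refine (integrable_const ((max |m| |m'|) ^ n)).mono'
      ((hBmeas.pow_const n).aestronglyMeasurable) ?_
    filter_upwards [hae] with ω hω
    rcases hω with h | h <;> rw [Real.norm_eq_abs, abs_pow, h] <;>
      exact pow_le_pow_left₀ (abs_nonneg _) (by simp [le_max_left, le_max_right]) n
  have hBmom : ∀ n : ℕ, ∫ ω, B ω ^ n ∂P = t * m ^ n + (1 - t) * m' ^ n := by
    intro n
    have hgae : (fun ω => B ω ^ n)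
        =ᵐ[P] (fun ω => A.indicator (fun _ => m ^ n) ω + A'.indicator (fun _ => m' ^ n) ω) := by
      filter_upwards [hae] with ω hω
      rcases hω with h | h
      · have h1 : ω ∈ A := h
        have h2 : ω ∉ A' := fun hh => hne (h.symm.trans hh)
        simp [Set.indicator_of_mem h1, Set.indicator_of_notMem h2, h]
      · have h2 : ω ∈ A' := h
        have h1 : ω ∉ A := fun hh => hne (hh.symm.trans h)
        simp [Set.indicator_of_mem h2, Set.indicator_of_notMem h1, h]
    rw [integral_congr_ae hgae, integral_add ((integrable_const _).indicator hA)
      ((integrable_const _).indicator hA'), integral_indicator_const _ hA,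
      integral_indicator_const _ hA', measureReal_def, measureReal_def, hBm, hBm', ENNReal.toReal_ofReal ht_nonneg,
      ENNReal.toReal_ofReal (by linarith : (0:ℝ) ≤ 1 - t)]
    simp [mul_comm]
  -- moments of Z
  have hvr : (0:ℝ) < β₂ / 2 := by linarith
  have hZint : ∀ n : ℕ, Integrable (fun ω => Z ω ^ n) P := by
    intro n
    have h := (aux_gaussianReal_pow (β₂/2) hvr n).2
    rw [← hZlaw] at h
    exact (integrable_map_measure ((measurable_id.pow_const n).aestronglyMeasurable)
      hZmeas.aemeasurable).mp h
  have hZmom : ∀ n : ℕ, ∫ ω, Z ω ^ n ∂P = ∫ x, x ^ n ∂(gaussianReal 0 (β₂/2).toNNReal) := by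
    intro n
    rw [← hZlaw]
    exact (integral_map hZmeas.aemeasurable
      ((measurable_id.pow_const n).aestronglyMeasurable)).symm
  have hg := aux_gaussianReal_moments (β₂/2) hvr
  have hZ1 : ∫ ω, Z ω ^ 1 ∂P = 0 := by rw [hZmom 1]; exact hg.1
  have hZ2 : ∫ ω, Z ω ^ 2 ∂P = β₂ / 2 := by rw [hZmom 2]; exact hg.2.1
  have hZ3 : ∫ ω, Z ω ^ 3 ∂P = 0 := by rw [hZmom 3]; exact hg.2.2
  -- independence of powers
  have hip : ∀ i j : ℕ, IndepFun (fun ω => Z ω ^ i) (fun ω => B ω ^ j) P := fun i j =>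
    hindep.comp (measurable_id.pow_const i) (measurable_id.pow_const j)
  have hcrossint : ∀ i j : ℕ, Integrable (fun ω => Z ω ^ i * B ω ^ j) P := by
    intro i j
    exact (hip i j).integrable_mul (hZint i) (hBint j)
  have hcross : ∀ i j : ℕ, ∫ ω, Z ω ^ i * B ω ^ j ∂P
      = (∫ ω, Z ω ^ i ∂P) * (∫ ω, B ω ^ j ∂P) := by
    intro i j
    exact (hip i j).integral_mul_eq_mul_integral ((hZmeas.pow_const i).aestronglyMeasurable)
      ((hBmeas.pow_const j).aestronglyMeasurable)
  -- B moment values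
  have hB1 : ∫ ω, B ω ^ 1 ∂P = 0 := by
    rw [hBmom 1, ht2, hm']
    field_simp
    ring
  have hB2 : ∫ ω, B ω ^ 2 ∂P = β₂ / 2 := by
    rw [hBmom 2, ht2, hm']
    field_simp
    ring
  have hB3 : ∫ ω, B ω ^ 3 ∂P = β₃ := by
    rw [hBmom 3, ht2, hm']
    field_simp
    linear_combination (4*β₂*m^2 + 8*m^4) * hquad
  refine ⟨?_, ?_, ?_⟩
  · have : ∫ ω, (Z ω + B ω) ∂P = ∫ ω, Z ω ^ 1 ∂P + ∫ ω, B ω ^ 1 ∂P := by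
      rw [← integral_add]
      · congr 1 with ω; ring
      · exact hZint 1
      · exact hBint 1
    rw [this, hZ1, hB1, add_zero]
  · have hexp : ∀ ω, (Z ω + B ω) ^ 2
        = Z ω ^ 2 + (2 * (Z ω ^ 1 * B ω ^ 1) + B ω ^ 2) := fun ω => by ring
    have ic11 : Integrable (fun ω => 2 * (Z ω ^ 1 * B ω ^ 1)) P := (hcrossint 1 1).const_mul 2
    have i22 : Integrable (fun ω => 2 * (Z ω ^ 1 * B ω ^ 1) + B ω ^ 2) P :=
      ic11.add (hBint 2)
    have e2 : ∫ ω, (Z ω + B ω) ^ 2 ∂P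
        = ∫ ω, (Z ω ^ 2 + (2 * (Z ω ^ 1 * B ω ^ 1) + B ω ^ 2)) ∂P :=
      integral_congr_ae (Filter.Eventually.of_forall hexp)
    rw [e2, integral_add (hZint 2) i22, integral_add ic11 (hBint 2), integral_const_mul,
      hcross 1 1, hZ1, hZ2, hB2]
    ring
  · have hexp : ∀ ω, (Z ω + B ω) ^ 3
        = Z ω ^ 3 + (3 * (Z ω ^ 2 * B ω ^ 1) + (3 * (Z ω ^ 1 * B ω ^ 2) + B ω ^ 3)) :=
      fun ω => by ring
    have ic21 : Integrable (fun ω => 3 * (Z ω ^ 2 * B ω ^ 1)) P := (hcrossint 2 1).const_mul 3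
    have ic12 : Integrable (fun ω => 3 * (Z ω ^ 1 * B ω ^ 2)) P := (hcrossint 1 2).const_mul 3
    have i3a : Integrable (fun ω => 3 * (Z ω ^ 1 * B ω ^ 2) + B ω ^ 3) P := ic12.add (hBint 3)
    have i3b : Integrable
        (fun ω => 3 * (Z ω ^ 2 * B ω ^ 1) + (3 * (Z ω ^ 1 * B ω ^ 2) + B ω ^ 3)) P :=
      ic21.add i3a
    have e3 : ∫ ω, (Z ω + B ω) ^ 3 ∂P
        = ∫ ω, (Z ω ^ 3 + (3 * (Z ω ^ 2 * B ω ^ 1) + (3 * (Z ω ^ 1 * B ω ^ 2) + B ω ^ 3))) ∂P :=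
      integral_congr_ae (Filter.Eventually.of_forall hexp)
    rw [e3, integral_add (hZint 3) i3b, integral_add ic21 i3a, integral_add ic12 (hBint 3),
      integral_const_mul, integral_const_mul, hcross 2 1, hcross 1 2, hZ1, hZ2, hZ3, hB1, hB2, hB3]
    ring
end

section
/- Let f: ℝ → ℝ be a 1-Lipschitz function, Y a standard normal random variable, and B a real-valued random variable independent of Y. Then for every t > 0 and every positive integer i, the function x ↦ E f(x + tY + B) is i times differentiable and |d^i/dx^i E f(x + tY + B)| ≤ t^{1-i}·‖φ^{(i-1)}‖_1, where φ denotes the density of the standard normal distribution and ‖φ^{(i-1)}‖_1 is the L¹(ℝ)-norm of its (i−1)-th derivative. -/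
open MeasureTheory ProbabilityTheory Filter Real Topology Polynomial
open scoped ENNReal NNReal

noncomputable section
namespace DR17

lemma pow_mul_exp_le (m : ℕ) : ∃ C : ℝ, 0 ≤ C ∧ ∀ v : ℝ, |v| ^ m * Real.exp (-(v^2/4)) ≤ C := by
  refine ⟨1 + 4 ^ m * m.factorial, by positivity, fun v => ?_⟩
  have hexp : (0:ℝ) < Real.exp (v^2/4) := Real.exp_pos _
  have hexp1 : (1:ℝ) ≤ Real.exp (v^2/4) := Real.one_le_exp (by positivity)
  have key : (v^2/4) ^ m ≤ m.factorial * Real.exp (v^2/4) := by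
    have h1 : (v^2/4) ^ m / m.factorial ≤ Real.exp (v^2/4) := by
      calc (v^2/4) ^ m / m.factorial
          ≤ ∑ i ∈ Finset.range (m+1), (v^2/4) ^ i / i.factorial := by
            refine Finset.single_le_sum (f := fun i => (v^2/4)^i / i.factorial) ?_ (Finset.self_mem_range_succ m)
            intro i _; positivity
        _ ≤ Real.exp (v^2/4) := Real.sum_le_exp_of_nonneg (by positivity) _
    have hm : (0:ℝ) < m.factorial := by positivity
    rw [div_le_iff₀ hm] at h1
    linarith [h1]
  rw [Real.exp_neg, mul_inv_le_iff₀' hexp]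
  rcases le_or_gt |v| 1 with h | h
  · have h0 : |v| ^ m ≤ 1 := pow_le_one₀ (abs_nonneg v) h
    have h5 : (0:ℝ) ≤ 4^m * (m.factorial:ℝ) := by positivity
    nlinarith
  · have h1 : |v| ^ m ≤ (v^2) ^ m := by
      have h1' : |v| ^ m ≤ (|v|^2) ^ m := by
        rw [← pow_mul]
        exact pow_le_pow_right₀ h.le (by omega)
      simpa [sq_abs] using h1'
    have h2 : (v^2)^m = 4^m * (v^2/4)^m := by rw [div_pow]; field_simp
    have h3 : (4:ℝ)^m * (v^2/4)^m ≤ 4^m * (m.factorial * Real.exp (v^2/4)) :=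
      mul_le_mul_of_nonneg_left key (by positivity)
    nlinarith

lemma poly_gauss_bound (p : Polynomial ℝ) :
    ∃ C : ℝ, 0 ≤ C ∧ ∀ v : ℝ, |aeval v p| * Real.exp (-(v^2/2)) ≤ C * Real.exp (-(v^2/4)) := by
  -- choose C_j for each monomial
  have hCj : ∀ j : ℕ, ∃ C : ℝ, 0 ≤ C ∧ ∀ v : ℝ, |v| ^ j * Real.exp (-(v^2/4)) ≤ C :=
    pow_mul_exp_le
  choose Cf hCf0 hCf using hCj
  refine ⟨∑ j ∈ Finset.range (p.natDegree + 1), |p.coeff j| * Cf j,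
    Finset.sum_nonneg fun j _ => mul_nonneg (abs_nonneg _) (hCf0 j), fun v => ?_⟩
  have hsplit : Real.exp (-(v^2/2)) = Real.exp (-(v^2/4)) * Real.exp (-(v^2/4)) := by
    rw [← Real.exp_add]; ring_nf
  have haev : (aeval v) p = p.eval v := by
    rw [aeval_def, eval₂_eq_eval_map, Algebra.algebraMap_self, Polynomial.map_id]
  have habs : |aeval v p| ≤ ∑ j ∈ Finset.range (p.natDegree + 1), |p.coeff j| * |v| ^ j := by
    rw [haev, Polynomial.eval_eq_sum_range]
    refine (Finset.abs_sum_le_sum_abs _ _).trans ?_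
    refine Finset.sum_le_sum fun j _ => ?_
    rw [abs_mul, abs_pow]
  have h2 : (∑ j ∈ Finset.range (p.natDegree + 1), |p.coeff j| * |v| ^ j)
      * Real.exp (-(v^2/4)) ≤ ∑ j ∈ Finset.range (p.natDegree + 1), |p.coeff j| * Cf j := by
    rw [Finset.sum_mul]
    refine Finset.sum_le_sum fun j _ => ?_
    rw [mul_assoc]
    exact mul_le_mul_of_nonneg_left (hCf j v) (abs_nonneg _)
  calc |aeval v p| * Real.exp (-(v^2/2))
      = (|aeval v p| * Real.exp (-(v^2/4))) * Real.exp (-(v^2/4)) := by rw [hsplit]; ring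
    _ ≤ ((∑ j ∈ Finset.range (p.natDegree + 1), |p.coeff j| * |v| ^ j) * Real.exp (-(v^2/4)))
          * Real.exp (-(v^2/4)) := by
        have := (Real.exp_pos (-(v^2/4))).le
        gcongr
    _ ≤ (∑ j ∈ Finset.range (p.natDegree + 1), |p.coeff j| * Cf j) * Real.exp (-(v^2/4)) := by
        have := (Real.exp_pos (-(v^2/4))).le
        gcongr

lemma phi_eq : gaussianPDFReal 0 1 = fun y => (Real.sqrt (2*π))⁻¹ * Real.exp (-(y^2/2)) := by
  funext y
  simp only [gaussianPDFReal, NNReal.coe_one, mul_one, sub_zero]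
  ring_nf

lemma hgd : Differentiable ℝ (fun y : ℝ => Real.exp (-(y^2/2))) :=
  (((differentiable_pow 2).div_const 2).neg).exp

lemma iter_gauss (k : ℕ) : deriv^[k] (fun y : ℝ => Real.exp (-(y^2/2))) =
    fun y => (-1:ℝ)^k * aeval y (hermite k) * Real.exp (-(y^2/2)) :=
  funext fun x => Polynomial.deriv_gaussian_eq_hermite_mul_gaussian k x

lemma iteratedDeriv_phi (k : ℕ) : iteratedDeriv k (gaussianPDFReal 0 1) =
    fun y => (Real.sqrt (2*π))⁻¹ * ((-1:ℝ)^k * aeval y (hermite k) * Real.exp (-(y^2/2))) := by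
  rw [phi_eq, iteratedDeriv_eq_iterate]
  induction k with
  | zero => simp
  | succ n ih =>
    funext y
    have hd : Differentiable ℝ (fun y : ℝ => (-1:ℝ)^n * aeval y (hermite n)
        * Real.exp (-(y^2/2))) :=
      ((differentiable_const _).mul (Polynomial.differentiable_aeval _)).mul hgd
    rw [Function.iterate_succ_apply', ih]
    have : (fun y => (Real.sqrt (2*π))⁻¹ * ((-1:ℝ)^n * aeval y (hermite n)
        * Real.exp (-(y^2/2)))) = fun y => (Real.sqrt (2*π))⁻¹ *
          ((fun y => (-1:ℝ)^n * aeval y (hermite n) * Real.exp (-(y^2/2))) y) := rfl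
    rw [this, deriv_const_mul _ (hd y)]
    rw [← iter_gauss n, ← Function.iterate_succ_apply' deriv n, iter_gauss (n+1)]

lemma diff_iter_phi (k : ℕ) : Differentiable ℝ (iteratedDeriv k (gaussianPDFReal 0 1)) := by
  rw [iteratedDeriv_phi]
  exact (differentiable_const _).mul
    (((differentiable_const _).mul (Polynomial.differentiable_aeval _)).mul hgd)

lemma hasDerivAt_iter_phi (k : ℕ) (y : ℝ) :
    HasDerivAt (iteratedDeriv k (gaussianPDFReal 0 1))
      (iteratedDeriv (k+1) (gaussianPDFReal 0 1) y) y := by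
  rw [iteratedDeriv_succ]
  exact (diff_iter_phi k y).hasDerivAt

lemma bound_iter_phi (k : ℕ) : ∃ C : ℝ, 0 ≤ C ∧
    ∀ v : ℝ, |iteratedDeriv k (gaussianPDFReal 0 1) v| ≤ C * Real.exp (-(v^2/4)) := by
  obtain ⟨C, hC0, hC⟩ := poly_gauss_bound ((hermite k).map (algebraMap ℤ ℝ))
  have hs : (0:ℝ) ≤ (Real.sqrt (2*π))⁻¹ := by positivity
  refine ⟨(Real.sqrt (2*π))⁻¹ * C, by positivity, fun v => ?_⟩
  have hev : (aeval v ((hermite k).map (algebraMap ℤ ℝ)) : ℝ) = aeval v (hermite k) := by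
    rw [aeval_def, aeval_def, eval₂_eq_eval_map, eval₂_eq_eval_map, Polynomial.map_map]
    norm_num
  rw [iteratedDeriv_phi]
  have h1 : |(Real.sqrt (2*π))⁻¹ * ((-1:ℝ)^k * aeval v (hermite k) * Real.exp (-(v^2/2)))|
      = (Real.sqrt (2*π))⁻¹ * (|aeval v (hermite k)| * Real.exp (-(v^2/2))) := by
    rw [abs_mul, abs_mul, abs_mul, abs_pow, abs_neg, abs_one, one_pow, one_mul,
      abs_of_nonneg hs, abs_of_nonneg (Real.exp_pos _).le]
  rw [h1, mul_assoc]
  refine mul_le_mul_of_nonneg_left ?_ hs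
  rw [← hev]
  exact hC v

lemma integrable_exp_quarter : Integrable (fun v : ℝ => Real.exp (-(v^2/4))) := by
  have h := integrable_exp_neg_mul_sq (show (0:ℝ) < 1/4 by norm_num)
  exact h.congr (Filter.Eventually.of_forall fun x => by ring_nf)

lemma integ_master (a b c : ℝ) :
    Integrable (fun y : ℝ => (a + b * |y|) * Real.exp (-((y - c)^2/8))) := by
  have h8 : (0:ℝ) < 1/8 := by norm_num
  have h1 : Integrable (fun y : ℝ => Real.exp (-(y^2/8))) :=
    (integrable_exp_neg_mul_sq h8).congr (Filter.Eventually.of_forall fun x => by ring_nf)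
  have h2 : Integrable (fun y : ℝ => |y| * Real.exp (-(y^2/8))) := by
    have h := (integrable_rpow_mul_exp_neg_mul_sq h8 (show (-1:ℝ) < 1 by norm_num)).abs
    refine h.congr (Filter.Eventually.of_forall fun x => ?_)
    simp only [Real.rpow_one, abs_mul, Real.abs_exp]
    ring_nf
  have h3 : Integrable (fun y : ℝ => (a + b * |y + c|) * Real.exp (-(y^2/8))) := by
    refine Integrable.mono'
      (g := fun y => (|a| + |b| * |c|) * Real.exp (-(y^2/8)) + |b| * (|y| * Real.exp (-(y^2/8))))
      ((h1.const_mul _).add (h2.const_mul _)) ?_ (Filter.Eventually.of_forall fun y => ?_)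
    · exact ((continuous_const.add (continuous_const.mul
        ((continuous_id.add continuous_const).abs))).mul
        (Real.continuous_exp.comp (by continuity))).aestronglyMeasurable
    · have he := (Real.exp_pos (-(y^2/8))).le
      have htri : |y + c| ≤ |y| + |c| := abs_add_le y c
      have h4 : abs (a + b * abs (y + c)) ≤ |a| + |b| * (|y| + |c|) := by
        refine (abs_add_le _ _).trans ?_
        rw [abs_mul, abs_abs]
        exact add_le_add le_rfl (mul_le_mul_of_nonneg_left htri (abs_nonneg b))
      rw [Real.norm_eq_abs, abs_mul, abs_of_nonneg he]
      nlinarith [abs_nonneg b, abs_nonneg y, Real.exp_pos (-(y^2/8))]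
  have h5 := h3.comp_sub_right c
  refine h5.congr (Filter.Eventually.of_forall fun y => ?_)
  have hy : y - c + c = y := by ring
  simp only []
  rw [hy]


/-- The key kernel integrals. -/
def Dk (f : ℝ → ℝ) (t : ℝ) (k : ℕ) : ℝ → ℝ := fun c =>
  ∫ y, f (t*y) * ((-1:ℝ)^k * iteratedDeriv k (gaussianPDFReal 0 1) (y - c))

section D

variable {f : ℝ → ℝ} {t : ℝ}

lemma flin (hf : LipschitzWith 1 f) (z : ℝ) : |f z| ≤ |f 0| + |z| := by
  have h := hf.dist_le_mul z 0
  rw [Real.dist_eq, Real.dist_eq, NNReal.coe_one, one_mul, sub_zero] at h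
  calc |f z| = |f 0 + (f z - f 0)| := by ring_nf
    _ ≤ |f 0| + |f z - f 0| := abs_add_le _ _
    _ ≤ |f 0| + |z| := by linarith

lemma fdiff (hf : LipschitzWith 1 f) (z w : ℝ) : |f z - f w| ≤ |z - w| := by
  have h := hf.dist_le_mul z w
  rwa [Real.dist_eq, Real.dist_eq, NNReal.coe_one, one_mul] at h

lemma contDk (hf : LipschitzWith 1 f) (k : ℕ) (x : ℝ) (s : ℝ) :
    Continuous fun y => f (t*y + s) * ((-1:ℝ)^k * iteratedDeriv k (gaussianPDFReal 0 1) (y - x)) :=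
  (hf.continuous.comp ((continuous_const.mul continuous_id).add continuous_const)).mul
    (continuous_const.mul ((diff_iter_phi k).continuous.comp (continuous_id.sub continuous_const)))

lemma integA (hf : LipschitzWith 1 f) (ht : 0 < t) (s c : ℝ) (k : ℕ) :
    Integrable (fun y : ℝ =>
      f (t*y + s) * ((-1:ℝ)^k * iteratedDeriv k (gaussianPDFReal 0 1) (y - c))) := by
  obtain ⟨C, hC0, hC⟩ := bound_iter_phi k
  refine (integ_master ((|f 0| + |s|)*C) (t*C) c).mono'
    ((contDk hf k c s).aestronglyMeasurable) (Filter.Eventually.of_forall fun y => ?_)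
  have h1 : |f (t*y + s)| ≤ (|f 0| + |s|) + t*|y| := by
    refine (flin hf _).trans ?_
    have : |t*y + s| ≤ t*|y| + |s| := by
      refine (abs_add_le _ _).trans ?_
      rw [abs_mul, abs_of_pos ht]
    linarith
  have h2 : |iteratedDeriv k (gaussianPDFReal 0 1) (y - c)| ≤ C * Real.exp (-((y-c)^2/8)) := by
    refine (hC _).trans (mul_le_mul_of_nonneg_left ?_ hC0)
    exact Real.exp_le_exp.mpr (by nlinarith [sq_nonneg (y - c)])
  have h3 : ‖f (t*y + s) * ((-1:ℝ)^k * iteratedDeriv k (gaussianPDFReal 0 1) (y - c))‖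
      = |f (t*y + s)| * |iteratedDeriv k (gaussianPDFReal 0 1) (y - c)| := by
    rw [Real.norm_eq_abs, abs_mul, abs_mul, abs_pow, abs_neg, abs_one, one_pow, one_mul]
  rw [h3]
  calc |f (t*y + s)| * |iteratedDeriv k (gaussianPDFReal 0 1) (y - c)|
      ≤ ((|f 0| + |s|) + t*|y|) * (C * Real.exp (-((y-c)^2/8))) :=
        mul_le_mul h1 h2 (abs_nonneg _) (by positivity)
    _ = ((|f 0| + |s|)*C + (t*C) * |y|) * Real.exp (-((y-c)^2/8)) := by ring

lemma DkderivA (hf : LipschitzWith 1 f) (ht : 0 < t) (k : ℕ) (c : ℝ) :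
    HasDerivAt (Dk f t k) (Dk f t (k+1) c) c := by
  obtain ⟨C, hC0, hC⟩ := bound_iter_phi (k+1)
  have key := hasDerivAt_integral_of_dominated_loc_of_deriv_le (μ := volume) (x₀ := c) (s := Metric.ball c 1)
    (F := fun x y => f (t*y) * ((-1:ℝ)^k * iteratedDeriv k (gaussianPDFReal 0 1) (y - x)))
    (F' := fun x y => f (t*y) * ((-1:ℝ)^(k+1) * iteratedDeriv (k+1) (gaussianPDFReal 0 1) (y - x)))
    (bound := fun y => (|f 0| * (C * Real.exp 4⁻¹) + t * (C * Real.exp 4⁻¹) * |y|)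
      * Real.exp (-((y - c)^2/8)))
    (Metric.ball_mem_nhds c one_pos)
    (Filter.Eventually.of_forall fun x => by
      simpa using (contDk hf k x 0).aestronglyMeasurable)
    (by simpa using integA hf ht 0 c k)
    (by simpa using (contDk hf (k+1) c 0).aestronglyMeasurable)
    (Filter.Eventually.of_forall fun y => fun x hx => ?_)
    (integ_master _ _ c)
    (Filter.Eventually.of_forall fun y => fun x _ => ?_)
  · exact key.2
  · -- bound
    have hxc : |x - c| < 1 := by
      rw [Metric.mem_ball, Real.dist_eq] at hx; exact hx
    have h1 : |f (t*y)| ≤ |f 0| + t*|y| := by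
      refine (flin hf _).trans ?_
      rw [abs_mul, abs_of_pos ht]
    have h2 : |iteratedDeriv (k+1) (gaussianPDFReal 0 1) (y - x)|
        ≤ C * (Real.exp 4⁻¹ * Real.exp (-((y-c)^2/8))) := by
      refine (hC _).trans (mul_le_mul_of_nonneg_left ?_ hC0)
      rw [← Real.exp_add]
      refine Real.exp_le_exp.mpr ?_
      nlinarith [sq_nonneg ((y - x) - (x - c)), sq_nonneg ((y - x) + (x - c)), sq_nonneg (x - c),
        sq_abs (x - c), abs_nonneg (x - c)]
    have h3 : ‖f (t*y) * ((-1:ℝ)^(k+1) * iteratedDeriv (k+1) (gaussianPDFReal 0 1) (y - x))‖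
        = |f (t*y)| * |iteratedDeriv (k+1) (gaussianPDFReal 0 1) (y - x)| := by
      rw [Real.norm_eq_abs, abs_mul, abs_mul, abs_pow, abs_neg, abs_one, one_pow, one_mul]
    rw [h3]
    calc |f (t*y)| * |iteratedDeriv (k+1) (gaussianPDFReal 0 1) (y - x)|
        ≤ (|f 0| + t*|y|) * (C * (Real.exp 4⁻¹ * Real.exp (-((y-c)^2/8)))) :=
          mul_le_mul h1 h2 (abs_nonneg _) (by positivity)
      _ = (|f 0| * (C * Real.exp 4⁻¹) + t * (C * Real.exp 4⁻¹) * |y|)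
          * Real.exp (-((y - c)^2/8)) := by ring
  · -- differentiability
    have h1 : HasDerivAt (fun x : ℝ => y - x) (-1) x := by
      simpa using (hasDerivAt_id x).const_sub y
    have h2 := (hasDerivAt_iter_phi k (y - x)).comp x h1
    have h3 := (h2.const_mul ((-1:ℝ)^k)).const_mul (f (t*y))
    have h4 : HasDerivAt (fun x => f (t*y) * ((-1:ℝ)^k * iteratedDeriv k (gaussianPDFReal 0 1) (y - x)))
        (f (t*y) * ((-1:ℝ)^k * (iteratedDeriv (k+1) (gaussianPDFReal 0 1) (y - x) * -1))) x := h3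
    exact h4.congr_deriv (by ring)

end D

section D2

variable {f : ℝ → ℝ} {t : ℝ}

lemma intphi (k : ℕ) :
    Integrable (fun y : ℝ => |iteratedDeriv k (gaussianPDFReal 0 1) y|) := by
  obtain ⟨C, hC0, hC⟩ := bound_iter_phi k
  refine (integrable_exp_quarter.const_mul C).mono'
    ((diff_iter_phi k).continuous.abs.aestronglyMeasurable)
    (Filter.Eventually.of_forall fun y => ?_)
  rw [Real.norm_eq_abs, abs_abs]
  exact hC y

lemma Dklip (hf : LipschitzWith 1 f) (ht : 0 < t) (k : ℕ) (x c : ℝ) :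
    |Dk f t k x - Dk f t k c|
      ≤ (t * ∫ y, |iteratedDeriv k (gaussianPDFReal 0 1) y|) * |x - c| := by
  have hshift : Dk f t k x
      = ∫ y, f (t*y + t*(x-c)) * ((-1:ℝ)^k * iteratedDeriv k (gaussianPDFReal 0 1) (y - c)) := by
    have h := integral_add_right_eq_self (μ := volume)
      (fun y => f (t*y) * ((-1:ℝ)^k * iteratedDeriv k (gaussianPDFReal 0 1) (y - x))) (x - c)
    rw [show Dk f t k x = ∫ y, f (t*y)
      * ((-1:ℝ)^k * iteratedDeriv k (gaussianPDFReal 0 1) (y - x)) from rfl, ← h]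
    refine integral_congr_ae (Filter.Eventually.of_forall fun y => ?_)
    have h1 : t * (y + (x - c)) = t*y + t*(x-c) := by ring
    have h2 : y + (x - c) - x = y - c := by ring
    simp only [h1, h2]
  have hsub : Dk f t k x - Dk f t k c = ∫ y, (f (t*y + t*(x-c)) - f (t*y))
      * ((-1:ℝ)^k * iteratedDeriv k (gaussianPDFReal 0 1) (y - c)) := by
    rw [hshift, show Dk f t k c = ∫ y, f (t*y)
      * ((-1:ℝ)^k * iteratedDeriv k (gaussianPDFReal 0 1) (y - c)) from rfl]
    rw [← integral_sub (integA hf ht (t*(x-c)) c k) (by simpa using integA hf ht 0 c k)]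
    refine integral_congr_ae (Filter.Eventually.of_forall fun y => ?_)
    ring
  rw [hsub]
  have hbd : ∀ y : ℝ, ‖(f (t*y + t*(x-c)) - f (t*y))
      * ((-1:ℝ)^k * iteratedDeriv k (gaussianPDFReal 0 1) (y - c))‖
      ≤ (t * |x - c|) * |iteratedDeriv k (gaussianPDFReal 0 1) (y - c)| := by
    intro y
    rw [Real.norm_eq_abs, abs_mul, abs_mul, abs_pow, abs_neg, abs_one, one_pow, one_mul]
    refine mul_le_mul_of_nonneg_right ?_ (abs_nonneg _)
    refine (fdiff hf _ _).trans ?_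
    rw [show t*y + t*(x-c) - t*y = t*(x-c) by ring, abs_mul, abs_of_pos ht]
  have hint : Integrable (fun y : ℝ =>
      (t * |x - c|) * |iteratedDeriv k (gaussianPDFReal 0 1) (y - c)|) :=
    ((intphi k).comp_sub_right c).const_mul _
  calc |∫ y, (f (t*y + t*(x-c)) - f (t*y))
      * ((-1:ℝ)^k * iteratedDeriv k (gaussianPDFReal 0 1) (y - c))|
      ≤ ∫ y, (t * |x - c|) * |iteratedDeriv k (gaussianPDFReal 0 1) (y - c)| :=
        norm_integral_le_of_norm_le hint (Filter.Eventually.of_forall hbd)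
    _ = (t * |x - c|) * ∫ y, |iteratedDeriv k (gaussianPDFReal 0 1) (y - c)| :=
        integral_const_mul _ _
    _ = (t * ∫ y, |iteratedDeriv k (gaussianPDFReal 0 1) y|) * |x - c| := by
        rw [integral_sub_right_eq_self (fun y => |iteratedDeriv k (gaussianPDFReal 0 1) y|) c]
        ring

lemma Dkbound (hf : LipschitzWith 1 f) (ht : 0 < t) (k : ℕ) (c : ℝ) :
    |Dk f t (k+1) c| ≤ t * ∫ y, |iteratedDeriv k (gaussianPDFReal 0 1) y| := by
  set L := t * ∫ y, |iteratedDeriv k (gaussianPDFReal 0 1) y| with hL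
  have hL0 : 0 ≤ L := mul_nonneg ht.le (integral_nonneg fun y => abs_nonneg _)
  have h1 : Tendsto (slope (Dk f t k) c) (𝓝[≠] c) (𝓝 (Dk f t (k+1) c)) :=
    hasDerivAt_iff_tendsto_slope.mp (DkderivA hf ht k c)
  refine le_of_tendsto h1.abs (Filter.Eventually.of_forall fun x => ?_)
  rw [slope_def_field]
  rcases eq_or_ne x c with h | h
  · simp [h, hL0]
  · have hxc : 0 < |x - c| := abs_pos.mpr (sub_ne_zero.mpr h)
    rw [abs_div]
    rw [div_le_iff₀ hxc]
    exact Dklip hf ht k x c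

lemma Feq (hf : LipschitzWith 1 f) (ht : 0 < t) (w : ℝ) :
    Dk f t 0 (w/t) = ∫ y, f (w + t*y) ∂(gaussianReal 0 1) := by
  have hne : t ≠ 0 := ht.ne'
  have hmeas : Measurable fun x : ℝ => (gaussianPDFReal 0 1 x).toNNReal :=
    (measurable_gaussianPDFReal 0 1).real_toNNReal
  rw [gaussianReal_of_var_ne_zero 0 one_ne_zero]
  have hwd : (volume.withDensity (gaussianPDF 0 1))
      = volume.withDensity (fun x => ((gaussianPDFReal 0 1 x).toNNReal : ℝ≥0∞)) := rfl
  rw [hwd, integral_withDensity_eq_integral_smul hmeas]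
  have hres : ∀ y : ℝ, (gaussianPDFReal 0 1 y).toNNReal • f (w + t*y)
      = gaussianPDFReal 0 1 y * f (w + t*y) := by
    intro y
    rw [NNReal.smul_def, Real.coe_toNNReal _ (gaussianPDFReal_nonneg 0 1 y), smul_eq_mul]
  have h0 : Dk f t 0 (w/t)
      = ∫ y, f (t*y) * gaussianPDFReal 0 1 (y - w/t) := by
    refine integral_congr_ae (Filter.Eventually.of_forall fun y => ?_)
    simp [iteratedDeriv_zero]
  rw [h0]
  have h := integral_add_right_eq_self (μ := volume)
    (fun y => f (t*y) * gaussianPDFReal 0 1 (y - w/t)) (w/t)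
  rw [← h]
  refine integral_congr_ae (Filter.Eventually.of_forall fun y => ?_)
  have h1 : t * (y + w/t) = w + t*y := by field_simp; ring
  have h2 : y + w/t - w/t = y := by ring
  simp only [h1, h2, hres]
  ring


end D2

def Fkk (f : ℝ → ℝ) (t : ℝ) (k : ℕ) : ℝ → ℝ := fun w => (t⁻¹)^k * Dk f t k (w/t)

section FG

variable {f : ℝ → ℝ} {t : ℝ}

lemma FkkD (hf : LipschitzWith 1 f) (ht : 0 < t) (k : ℕ) (w : ℝ) :
    HasDerivAt (Fkk f t k) (Fkk f t (k+1) w) w := by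
  have h1 : HasDerivAt (fun w : ℝ => w/t) (1/t) w := (hasDerivAt_id w).div_const t
  have h2 := (DkderivA hf ht k (w/t)).comp w h1
  have h3 := h2.const_mul ((t⁻¹)^k)
  have h4 : HasDerivAt (Fkk f t k) (t⁻¹ ^ k * (Dk f t (k + 1) (w / t) * (1 / t))) w := h3
  convert h4 using 1
  show (t⁻¹)^(k+1) * Dk f t (k+1) (w/t) = _
  rw [pow_succ, one_div]
  ring

lemma Fkkb (hf : LipschitzWith 1 f) (ht : 0 < t) (k : ℕ) (w : ℝ) :
    |Fkk f t (k+1) w| ≤ (t⁻¹)^k * ∫ y, |iteratedDeriv k (gaussianPDFReal 0 1) y| := by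
  have hne : t ≠ 0 := ht.ne'
  have h0 : |Fkk f t (k+1) w| = (t⁻¹)^(k+1) * |Dk f t (k+1) (w/t)| := by
    show |(t⁻¹)^(k+1) * Dk f t (k+1) (w/t)| = _
    rw [abs_mul, abs_of_nonneg (by positivity)]
  rw [h0]
  calc (t⁻¹)^(k+1) * |Dk f t (k+1) (w/t)|
      ≤ (t⁻¹)^(k+1) * (t * ∫ y, |iteratedDeriv k (gaussianPDFReal 0 1) y|) :=
        mul_le_mul_of_nonneg_left (Dkbound hf ht k (w/t)) (by positivity)
    _ = (t⁻¹)^k * ∫ y, |iteratedDeriv k (gaussianPDFReal 0 1) y| := by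
        rw [pow_succ]
        field_simp

lemma Fkkdiff (hf : LipschitzWith 1 f) (ht : 0 < t) (k : ℕ) : Differentiable ℝ (Fkk f t k) :=
  fun w => (FkkD hf ht k w).differentiableAt

variable {ν : Measure ℝ} [IsProbabilityMeasure ν]

def Gkk (f : ℝ → ℝ) (t : ℝ) (ν : Measure ℝ) (k : ℕ) : ℝ → ℝ := fun x => ∫ b, Fkk f t k (x + b) ∂ν

lemma Gkk_int (hf : LipschitzWith 1 f) (ht : 0 < t)
    (hint0 : ∀ x : ℝ, Integrable (fun b => Fkk f t 0 (x + b)) ν)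
    (k : ℕ) (x : ℝ) : Integrable (fun b => Fkk f t k (x + b)) ν := by
  cases k with
  | zero => exact hint0 x
  | succ k =>
    refine (integrable_const ((t⁻¹)^k * ∫ y, |iteratedDeriv k (gaussianPDFReal 0 1) y|)).mono'
      (((Fkkdiff hf ht (k+1)).continuous.comp (continuous_const.add continuous_id)).aestronglyMeasurable)
      (Filter.Eventually.of_forall fun b => ?_)
    rw [Real.norm_eq_abs]
    exact Fkkb hf ht k (x + b)

lemma GkkD (hf : LipschitzWith 1 f) (ht : 0 < t)
    (hint0 : ∀ x : ℝ, Integrable (fun b => Fkk f t 0 (x + b)) ν)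
    (k : ℕ) (x : ℝ) : HasDerivAt (Gkk f t ν k) (Gkk f t ν (k+1) x) x := by
  have key := hasDerivAt_integral_of_dominated_loc_of_deriv_le (μ := ν) (x₀ := x) (s := Metric.ball x 1)
    (F := fun x b => Fkk f t k (x + b)) (F' := fun x b => Fkk f t (k+1) (x + b))
    (bound := fun _ => (t⁻¹)^k * ∫ y, |iteratedDeriv k (gaussianPDFReal 0 1) y|)
    (Metric.ball_mem_nhds x one_pos)
    (Filter.Eventually.of_forall fun x' =>
      (((Fkkdiff hf ht k).continuous.comp (continuous_const.add continuous_id)).aestronglyMeasurable))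
    (Gkk_int hf ht hint0 k x)
    (((Fkkdiff hf ht (k+1)).continuous.comp (continuous_const.add continuous_id)).aestronglyMeasurable)
    (Filter.Eventually.of_forall fun b x' _ => by
      rw [Real.norm_eq_abs]; exact Fkkb hf ht k (x' + b))
    (integrable_const _)
    (Filter.Eventually.of_forall fun b x' _ => by
      simpa [Function.comp_def] using (FkkD hf ht k (x' + b)).comp x' ((hasDerivAt_id x').add_const b))
  exact key.2

lemma Gkk_iter (hf : LipschitzWith 1 f) (ht : 0 < t)
    (hint0 : ∀ x : ℝ, Integrable (fun b => Fkk f t 0 (x + b)) ν)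
    (k : ℕ) : iteratedDeriv k (Gkk f t ν 0) = Gkk f t ν k := by
  induction k with
  | zero => simp [iteratedDeriv_zero]
  | succ n ih =>
    rw [iteratedDeriv_succ, ih]
    funext x
    exact (GkkD hf ht hint0 n x).deriv

lemma Gkk_contDiff (hf : LipschitzWith 1 f) (ht : 0 < t)
    (hint0 : ∀ x : ℝ, Integrable (fun b => Fkk f t 0 (x + b)) ν)
    (n : ℕ) : ∀ k, ContDiff ℝ n (Gkk f t ν k) := by
  induction n with
  | zero =>
    intro k
    rw [Nat.cast_zero, contDiff_zero]
    exact Differentiable.continuous (fun x => (GkkD hf ht hint0 k x).differentiableAt)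
  | succ n ih =>
    intro k
    rw [Nat.cast_succ, contDiff_succ_iff_deriv]
    refine ⟨fun x => (GkkD hf ht hint0 k x).differentiableAt, fun h => absurd h (by simp), ?_⟩
    have hd : deriv (Gkk f t ν k) = Gkk f t ν (k+1) := funext fun x => (GkkD hf ht hint0 k x).deriv
    rw [hd]
    exact ih (k+1)

end FG
end DR17
end

open DR17 in
/-- **Derivative bounds for Gaussian-smoothed Lipschitz functions**
(Dedecker–Rio, Lemma 2.1). -/
theorem stmt_17
    {Ω : Type*} {mΩ : MeasurableSpace Ω} (P : Measure Ω) [IsProbabilityMeasure P]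
    (f : ℝ → ℝ) (hf : LipschitzWith 1 f)
    (Y B : Ω → ℝ) (hYmeas : Measurable Y) (hBmeas : Measurable B)
    (hYlaw : Measure.map Y P = gaussianReal 0 1)
    (hindep : IndepFun Y B P)
    (t : ℝ) (ht : 0 < t) (i : ℕ) (hi : 1 ≤ i) :
    ContDiff ℝ i (fun x => ∫ ω, f (x + t * Y ω + B ω) ∂P) ∧
    ∀ x : ℝ,
      |iteratedDeriv i (fun x => ∫ ω, f (x + t * Y ω + B ω) ∂P) x| ≤
        t ^ (1 - (i : ℤ)) * ∫ y : ℝ, |iteratedDeriv (i - 1) (gaussianPDFReal 0 1) y| := by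
  classical
  have hfc : Continuous f := hf.continuous
  have hmeasx : ∀ x : ℝ, Measurable (fun ω => f (x + t * Y ω + B ω)) := fun x =>
    hfc.measurable.comp ((measurable_const.add (hYmeas.const_mul t)).add hBmeas)
  have hRHS0 : 0 ≤ t ^ (1 - (i : ℤ)) * ∫ y : ℝ, |iteratedDeriv (i - 1) (gaussianPDFReal 0 1) y| :=
    mul_nonneg (zpow_nonneg ht.le _) (integral_nonneg fun y => abs_nonneg _)
  have hzero_iter : ∀ n : ℕ, iteratedDeriv n (fun _ : ℝ => (0:ℝ)) = fun _ => (0:ℝ) := by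
    intro n
    induction n with
    | zero => simp [iteratedDeriv_zero]
    | succ m ih => rw [iteratedDeriv_succ, ih]; funext x; simp
  have hshiftInt : ∀ x x' : ℝ, Integrable (fun ω => f (x + t*Y ω + B ω)) P →
      Integrable (fun ω => f (x' + t*Y ω + B ω)) P := by
    intro x x' h
    have hb : Integrable (fun ω => f (x' + t*Y ω + B ω) - f (x + t*Y ω + B ω)) P := by
      refine (integrable_const |x' - x|).mono'
        (((hmeasx x').sub (hmeasx x)).aestronglyMeasurable)
        (Filter.Eventually.of_forall fun ω => ?_)
      rw [Real.norm_eq_abs]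
      refine (fdiff hf _ _).trans ?_
      rw [show x' + t*Y ω + B ω - (x + t*Y ω + B ω) = x' - x by ring]
    refine (h.add hb).congr (Filter.Eventually.of_forall fun ω => ?_)
    simp only [Pi.add_apply]
    ring
  by_cases hInt : Integrable (fun ω => f (0 + t * Y ω + B ω)) P
  · -- integrable case
    set ν := P.map B with hν
    haveI : IsProbabilityMeasure ν := Measure.isProbabilityMeasure_map hBmeas.aemeasurable
    have hmapYB : P.map (fun ω => (Y ω, B ω)) = (gaussianReal 0 1).prod ν := by
      rw [hν, ← hYlaw]
      exact (indepFun_iff_map_prod_eq_prod_map_map hYmeas.aemeasurable hBmeas.aemeasurable).mp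
        hindep
    have hIntx : ∀ x, Integrable (fun ω => f (x + t*Y ω + B ω)) P := fun x => hshiftInt 0 x hInt
    have hmeasp : ∀ x : ℝ, Continuous (fun p : ℝ × ℝ => f (x + t * p.1 + p.2)) := fun x =>
      hfc.comp (by continuity)
    have hIntp : ∀ x, Integrable (fun p : ℝ × ℝ => f (x + t*p.1 + p.2))
        ((gaussianReal 0 1).prod ν) := by
      intro x
      rw [← hmapYB,
        integrable_map_measure (by rw [hmapYB]; exact (hmeasp x).aestronglyMeasurable)
          (hYmeas.prodMk hBmeas).aemeasurable]
      exact hIntx x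
    have hFeq : ∀ w : ℝ, Fkk f t 0 w = ∫ y, f (w + t*y) ∂(gaussianReal 0 1) := by
      intro w
      rw [show Fkk f t 0 w = (t⁻¹)^0 * Dk f t 0 (w/t) from rfl, pow_zero, one_mul]
      exact Feq hf ht w
    have hint0 : ∀ x : ℝ, Integrable (fun b => Fkk f t 0 (x + b)) ν := by
      intro x
      have h1 : Integrable (fun b => ∫ y, f (x + t*y + b) ∂(gaussianReal 0 1)) ν :=
        (hIntp x).integral_prod_right
      refine h1.congr (Filter.Eventually.of_forall fun b => ?_)
      show (∫ y, f (x + t*y + b) ∂(gaussianReal 0 1)) = Fkk f t 0 (x + b)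
      rw [hFeq (x + b)]
      refine integral_congr_ae (Filter.Eventually.of_forall fun y => ?_)
      ring_nf
    have hGrep : (fun x => ∫ ω, f (x + t*Y ω + B ω) ∂P) = Gkk f t ν 0 := by
      funext x
      have h1 : ∫ p : ℝ × ℝ, f (x + t*p.1 + p.2) ∂((gaussianReal 0 1).prod ν)
          = ∫ ω, f (x + t*Y ω + B ω) ∂P := by
        rw [← hmapYB]
        exact integral_map (hYmeas.prodMk hBmeas).aemeasurable
          (by rw [hmapYB]; exact (hmeasp x).aestronglyMeasurable)
      rw [← h1, integral_prod_symm _ (hIntp x)]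
      show _ = ∫ b, Fkk f t 0 (x + b) ∂ν
      refine integral_congr_ae (Filter.Eventually.of_forall fun b => ?_)
      show (∫ y, f (x + t*y + b) ∂(gaussianReal 0 1)) = Fkk f t 0 (x + b)
      rw [hFeq (x + b)]
      refine integral_congr_ae (Filter.Eventually.of_forall fun y => ?_)
      ring_nf
    rw [hGrep]
    refine ⟨Gkk_contDiff hf ht hint0 i 0, fun x => ?_⟩
    rw [Gkk_iter hf ht hint0 i]
    obtain ⟨j, rfl⟩ : ∃ j, i = j + 1 := ⟨i - 1, (Nat.succ_pred_eq_of_pos hi).symm⟩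
    have hb := norm_integral_le_of_norm_le_const (μ := ν)
      (f := fun b => Fkk f t (j+1) (x + b))
      (C := (t⁻¹)^j * ∫ y, |iteratedDeriv j (gaussianPDFReal 0 1) y|)
      (Filter.Eventually.of_forall fun b => by
        rw [Real.norm_eq_abs]; exact Fkkb hf ht j (x + b))
    rw [probReal_univ, mul_one] at hb
    simp only [Nat.add_sub_cancel]
    have hz : (t:ℝ) ^ (1 - ((j+1:ℕ):ℤ)) = (t⁻¹)^j := by
      have h1 : (1 - ((j+1:ℕ):ℤ)) = -(j:ℤ) := by push_cast; ring
      rw [h1, zpow_neg, zpow_natCast, inv_pow]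
    rw [hz, ← Real.norm_eq_abs]
    exact hb
  · -- non-integrable case
    have hzero : ∀ x, ¬ Integrable (fun ω => f (x + t*Y ω + B ω)) P := fun x hx =>
      hInt (hshiftInt x 0 hx)
    have hfun : (fun x => ∫ ω, f (x + t*Y ω + B ω) ∂P) = fun _ => (0:ℝ) :=
      funext fun x => integral_undef (hzero x)
    rw [hfun]
    refine ⟨contDiff_const, fun x => ?_⟩
    rw [hzero_iter i]
    simpa using hRHS0
end

section
/- Let a be an irrational number badly approximable by rationals, meaning for every ε > 0 the inequality d(ka, ℤ) < |k|^{-1-ε} has only finitely many solutions k ∈ ℤ. Then for every η > 0 there exists a positive constant C such that for every nonnegative integer N and every real p ≥ 2, Σ_{k=2^N}^{2^{N+1}-1} {ka}^{-p} ≤ 2·C^p·2^{p(N+2)(1+η)}, where {x} = d(x, ℤ) denotes the distance from x to the nearest integer. -/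
open Filter Real


lemma round_min (x : ℝ) (n : ℤ) : |x - round x| ≤ |x - (n : ℝ)| := by
  rcases eq_or_ne n (round x) with h | h
  · rw [h]
  · have h2 : |x - round x| ≤ 1 / 2 := abs_sub_round x
    have h1 : (1 : ℝ) ≤ |(round x : ℝ) - (n : ℝ)| := by
      have h0 : (1 : ℤ) ≤ |round x - n| := Int.one_le_abs (sub_ne_zero.2 (Ne.symm h))
      have : ((1:ℤ):ℝ) ≤ (|round x - n| : ℤ) := Int.cast_le.2 h0
      push_cast at this
      linarith
    have h3 : |(round x : ℝ) - n| ≤ |(round x : ℝ) - x| + |x - n| := abs_sub_le _ x _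
    have h4 : |(round x : ℝ) - x| = |x - round x| := abs_sub_comm _ _
    linarith

lemma exists_c (a : ℝ) (hairr : Irrational a) (η : ℝ) (hη : 0 < η)
    (hfin : {k : ℤ | |(k : ℝ) * a - round ((k : ℝ) * a)| < |(k : ℝ)| ^ (-(1:ℝ) - η)}.Finite) :
    ∃ c : ℝ, 0 < c ∧ c ≤ 1 ∧ ∀ k : ℤ, k ≠ 0 →
      c * |(k : ℝ)| ^ (-(1:ℝ) - η) ≤ |(k : ℝ) * a - round ((k : ℝ) * a)| := by
  classical
  set f : ℤ → ℝ := fun k => |(k : ℝ) * a - round ((k : ℝ) * a)| * |(k : ℝ)| ^ ((1:ℝ) + η) with hf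
  set S : Finset ℝ := insert (1:ℝ) ((hfin.toFinset.erase 0).image f) with hS
  have hSne : S.Nonempty := ⟨1, Finset.mem_insert_self _ _⟩
  have hgpos : ∀ k : ℤ, k ≠ 0 → 0 < |(k : ℝ) * a - round ((k : ℝ) * a)| := by
    intro k hk
    rw [abs_pos, sub_ne_zero]
    exact ((hairr.intCast_mul hk).ne_int _)
  have hpos : ∀ x ∈ S, 0 < x := by
    intro x hx
    rcases Finset.mem_insert.1 hx with rfl | hx
    · norm_num
    · obtain ⟨k, hk, rfl⟩ := Finset.mem_image.1 hx
      have hk0 : k ≠ 0 := Finset.ne_of_mem_erase hk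
      have habs : (0:ℝ) < |(k:ℝ)| := by
        rw [abs_pos, Int.cast_ne_zero]; exact hk0
      exact mul_pos (hgpos k hk0) (Real.rpow_pos_of_pos habs _)
  refine ⟨S.min' hSne, hpos _ (S.min'_mem hSne), S.min'_le _ (Finset.mem_insert_self _ _), ?_⟩
  intro k hk
  have habs : (0:ℝ) < |(k:ℝ)| := by rw [abs_pos, Int.cast_ne_zero]; exact hk
  have hrp : (0:ℝ) < |(k:ℝ)| ^ (-(1:ℝ) - η) := Real.rpow_pos_of_pos habs _
  by_cases hmem : k ∈ hfin.toFinset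
  · have hfk : f k ∈ S := Finset.mem_insert_of_mem
      (Finset.mem_image_of_mem f (Finset.mem_erase.2 ⟨hk, hmem⟩))
    have h1 : S.min' hSne ≤ f k := S.min'_le _ hfk
    have key : f k * |(k:ℝ)| ^ (-(1:ℝ) - η) = |(k : ℝ) * a - round ((k : ℝ) * a)| := by
      rw [hf]
      rw [mul_assoc, ← Real.rpow_add habs]
      norm_num
    calc S.min' hSne * |(k:ℝ)| ^ (-(1:ℝ) - η) ≤ f k * |(k:ℝ)| ^ (-(1:ℝ) - η) :=
          mul_le_mul_of_nonneg_right h1 hrp.le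
      _ = _ := key
  · have : ¬ |(k : ℝ) * a - round ((k : ℝ) * a)| < |(k : ℝ)| ^ (-(1:ℝ) - η) := by
      intro hcon
      exact hmem (hfin.mem_toFinset.2 hcon)
    push_neg at this
    have h1 : S.min' hSne ≤ 1 := S.min'_le _ (Finset.mem_insert_self _ _)
    nlinarith [hpos _ (S.min'_mem hSne)]

noncomputable def W : ℤ → ℝ := fun j => ((max 1 (max j (-1 - j)) : ℤ) : ℝ) ^ (-2 : ℝ)

lemma W_nonneg (j : ℤ) : 0 ≤ W j := Real.rpow_nonneg (by positivity) _

lemma exists_K : ∃ K : ℝ, 1 ≤ K ∧ ∀ J : Finset ℤ, ∑ j ∈ J, W j ≤ K := by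
  have hu : Summable (fun n : ℕ => ((max 1 n : ℕ) : ℝ) ^ (-2 : ℝ)) := by
    rw [← summable_nat_add_iff 1]
    have hbase : Summable (fun n : ℕ => ((n : ℝ)) ^ (-2 : ℝ)) :=
      Real.summable_nat_rpow.2 (by norm_num)
    have := (summable_nat_add_iff (f := fun n : ℕ => ((n : ℝ)) ^ (-2 : ℝ)) 1).2 hbase
    refine this.congr fun n => ?_
    congr 1
  have hW : Summable W := by
    apply Summable.of_nat_of_neg_add_one
    · refine hu.congr fun n => ?_
      unfold W
      rw [show (max 1 (max (n:ℤ) (-1 - (n:ℤ))) : ℤ) = ((max 1 n : ℕ) : ℤ) by push_cast; omega]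
      norm_num
    · refine hu.congr fun n => ?_
      unfold W
      rw [show (max 1 (max (-((n:ℤ)+1)) (-1 - -((n:ℤ)+1))) : ℤ) = ((max 1 n : ℕ) : ℤ) by push_cast; omega]
      norm_num
  refine ⟨max 1 (∑' j, W j), le_max_left _ _, fun J => ?_⟩
  exact le_trans (Summable.sum_le_tsum J (fun j _ => W_nonneg j) hW) (le_max_right _ _)


/-- **Dyadic-block bounds on negative-power sums of `{ka}` for badly approximable `a`**
(Dedecker–Rio, Lemma 5.1). -/
theorem stmt_18
    (a : ℝ) (hairr : Irrational a)
    (hbad : ∀ ε : ℝ, 0 < ε →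
      {k : ℤ | |(k : ℝ) * a - round ((k : ℝ) * a)| < |(k : ℝ)| ^ (-(1 : ℝ) - ε)}.Finite)
    (η : ℝ) (hη : 0 < η) :
    ∃ C : ℝ, 0 < C ∧ ∀ N : ℕ, ∀ p : ℝ, 2 ≤ p →
      ∑ k ∈ Finset.Ico (2 ^ N : ℕ) (2 ^ (N + 1)),
          |(k : ℝ) * a - round ((k : ℝ) * a)| ^ (-p) ≤
        2 * C ^ p * (2 : ℝ) ^ (p * (N + 2) * (1 + η)) := by
  classical
  obtain ⟨c, hc, hc1, hcb⟩ := exists_c a hairr η hη (hbad η hη)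
  obtain ⟨K, hK1, hKb⟩ := exists_K
  have hK0 : (0:ℝ) < K := lt_of_lt_of_le one_pos hK1
  refine ⟨K / c, div_pos hK0 hc, ?_⟩
  intro N p hp
  set g : ℕ → ℝ := fun k => (k : ℝ) * a - round ((k : ℝ) * a) with hg
  set s : Finset ℕ := Finset.Ico (2 ^ N : ℕ) (2 ^ (N + 1)) with hs
  have h2N : (0:ℝ) < (2:ℝ) ^ N := by positivity
  set δ : ℝ := c * ((2:ℝ) ^ N) ^ (-(1:ℝ) - η) with hδ
  have hδpos : 0 < δ := mul_pos hc (Real.rpow_pos_of_pos h2N _)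
  -- bound for natural k
  have hnat : ∀ k : ℕ, k ≠ 0 → c * ((k:ℝ)) ^ (-(1:ℝ) - η) ≤ |g k| := by
    intro k hk
    have h := hcb (k : ℤ) (Int.natCast_ne_zero.2 hk)
    rw [Int.cast_natCast, abs_of_nonneg (Nat.cast_nonneg k)] at h
    exact h
  -- separation
  have hsep : ∀ k ∈ s, ∀ k' ∈ s, k ≠ k' → δ ≤ |g k - g k'| := by
    intro k hk k' hk' hne
    rw [hs, Finset.mem_Ico] at hk hk'
    set m : ℤ := (k : ℤ) - (k' : ℤ) with hm
    have hm0 : m ≠ 0 := sub_ne_zero.2 (by exact_mod_cast hne)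
    have hA1 : 1 ≤ (2:ℕ) ^ N := Nat.one_le_two_pow
    have hApow : (2:ℕ) ^ (N+1) = 2 ^ N * 2 := pow_succ 2 N
    have h1 : |m| ≤ ((2:ℕ) ^ N : ℤ) := by
      rw [abs_le]; omega
    have hmabs : |(m:ℝ)| ≤ (2:ℝ) ^ N := by
      calc |(m:ℝ)| = ((|m| : ℤ) : ℝ) := by rw [Int.cast_abs]
        _ ≤ (((2:ℕ) ^ N : ℤ) : ℝ) := Int.cast_le.2 h1
        _ = (2:ℝ) ^ N := by push_cast; ring
    have hmpos : (0:ℝ) < |(m:ℝ)| := by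
      rw [abs_pos, Int.cast_ne_zero]; exact hm0
    have h2 : δ ≤ c * |(m:ℝ)| ^ (-(1:ℝ) - η) := by
      rw [hδ]
      exact mul_le_mul_of_nonneg_left
        (Real.rpow_le_rpow_of_nonpos hmpos hmabs (by linarith)) hc.le
    have h3 := hcb m hm0
    have h4 : |(m:ℝ) * a - round ((m:ℝ) * a)| ≤ |g k - g k'| := by
      have h5 := round_min ((m:ℝ) * a) (round ((k:ℝ) * a) - round ((k':ℝ) * a))
      have h6 : (m:ℝ) * a - ((round ((k:ℝ) * a) - round ((k':ℝ) * a) : ℤ) : ℝ)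
          = g k - g k' := by
        rw [hg, hm]; push_cast; ring
      rwa [h6] at h5
    linarith
  -- floor map and injectivity
  have hinj : ∀ k ∈ s, ∀ k' ∈ s, ⌊g k / δ⌋ = ⌊g k' / δ⌋ → k = k' := by
    intro k hk k' hk' he
    by_contra hne
    have hsp := hsep k hk k' hk' hne
    have b1 := Int.floor_le (g k / δ)
    have b2 := Int.lt_floor_add_one (g k / δ)
    have b3 := Int.floor_le (g k' / δ)
    have b4 := Int.lt_floor_add_one (g k' / δ)
    have hec : ((⌊g k / δ⌋ : ℤ) : ℝ) = ((⌊g k' / δ⌋ : ℤ) : ℝ) := by exact_mod_cast he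
    have hu : g k / δ * δ = g k := div_mul_cancel₀ _ (ne_of_gt hδpos)
    have hv : g k' / δ * δ = g k' := div_mul_cancel₀ _ (ne_of_gt hδpos)
    have h7 : |g k - g k'| = |g k / δ - g k' / δ| * δ := by
      rw [← hu, ← hv, ← sub_mul, abs_mul, abs_of_pos hδpos, hu, hv]
    have h8 : |g k / δ - g k' / δ| < 1 := by
      rw [abs_lt]; constructor <;> linarith
    rw [h7] at hsp
    nlinarith
  -- per-term bound
  have hterm : ∀ k ∈ s, |g k| ^ (-p) ≤ δ ^ (-p) * (2:ℝ) ^ ((1 + η) * p) * W ⌊g k / δ⌋ := by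
    intro k hk
    rw [hs, Finset.mem_Ico] at hk
    have hk0 : k ≠ 0 := by
      have : 1 ≤ (2:ℕ) ^ N := Nat.one_le_two_pow
      omega
    have hk1 : (1:ℝ) ≤ (k:ℝ) := by exact_mod_cast Nat.one_le_iff_ne_zero.2 hk0
    have hkpos : (0:ℝ) < (k:ℝ) := by linarith
    have hgabs : c * ((k:ℝ)) ^ (-(1:ℝ) - η) ≤ |g k| := hnat k hk0
    have hgpos : 0 < |g k| := lt_of_lt_of_le (by positivity) hgabs
    have hkle : (k:ℝ) ≤ (2:ℝ) ^ (N+1) := by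
      calc (k:ℝ) ≤ ((2^(N+1) : ℕ) : ℝ) := by exact_mod_cast hk.2.le
        _ = (2:ℝ)^(N+1) := by push_cast; ring
    have hlow1 : δ * (2:ℝ) ^ (-(1:ℝ) - η) ≤ |g k| := by
      have e1 : ((2:ℝ)^(N+1)) ^ (-(1:ℝ)-η) ≤ ((k:ℝ)) ^ (-(1:ℝ)-η) :=
        Real.rpow_le_rpow_of_nonpos hkpos hkle (by linarith)
      have e2 : δ * (2:ℝ) ^ (-(1:ℝ) - η) = c * ((2:ℝ)^(N+1)) ^ (-(1:ℝ)-η) := by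
        rw [hδ, pow_succ, Real.mul_rpow h2N.le (by norm_num)]
        ring
      calc δ * (2:ℝ)^(-(1:ℝ)-η) = c * ((2:ℝ)^(N+1))^(-(1:ℝ)-η) := e2
        _ ≤ c * ((k:ℝ))^(-(1:ℝ)-η) := mul_le_mul_of_nonneg_left e1 hc.le
        _ ≤ |g k| := hgabs
    set j : ℤ := ⌊g k / δ⌋ with hj
    have b1 : (j:ℝ) * δ ≤ g k := by
      have hfl := Int.floor_le (g k / δ)
      calc (j:ℝ) * δ ≤ (g k / δ) * δ := mul_le_mul_of_nonneg_right hfl hδpos.le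
        _ = g k := div_mul_cancel₀ _ (ne_of_gt hδpos)
    have b2 : g k < ((j:ℝ)+1) * δ := by
      have h := Int.lt_floor_add_one (g k / δ)
      have h2 := mul_lt_mul_of_pos_right h hδpos
      rwa [div_mul_cancel₀ _ (ne_of_gt hδpos)] at h2
    have hlow2 : ((max j (-1 - j) : ℤ) : ℝ) * δ ≤ |g k| := by
      rcases le_or_gt 0 j with hj0 | hj0
      · have hmax : max j (-1-j) = j := max_eq_left (by omega)
        rw [hmax]
        calc (j:ℝ) * δ ≤ g k := b1
          _ ≤ |g k| := le_abs_self _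
      · have hmax : max j (-1-j) = -1-j := max_eq_right (by omega)
        rw [hmax]
        have hj1 : (j:ℝ) + 1 ≤ 0 := by
          have : (j:ℤ) + 1 ≤ 0 := by omega
          exact_mod_cast this
        have hgneg : g k < 0 := by nlinarith
        calc ((-1 - j : ℤ):ℝ) * δ = -(((j:ℝ)+1) * δ) := by push_cast; ring
          _ ≤ -(g k) := by linarith
          _ ≤ |g k| := neg_le_abs _
    have h2e : (1:ℝ) ≤ (2:ℝ) ^ ((1+η)*p) := by
      have h := Real.rpow_le_rpow_of_exponent_le (by norm_num : (1:ℝ) ≤ 2)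
        (by nlinarith : (0:ℝ) ≤ (1+η)*p)
      rwa [Real.rpow_zero] at h
    rcases le_or_gt (max j (-1-j)) 0 with hM | hM
    · have hW : W j = 1 := by
        unfold W
        rw [max_eq_left (by omega : max j (-1-j) ≤ 1)]
        norm_num
      rw [hW, mul_one]
      have hbase : 0 < δ * (2:ℝ)^(-(1:ℝ)-η) := by positivity
      have hstep : |g k| ^ (-p) ≤ (δ * (2:ℝ)^(-(1:ℝ)-η)) ^ (-p) :=
        Real.rpow_le_rpow_of_nonpos hbase hlow1 (by linarith)
      have hsplit : (δ * (2:ℝ)^(-(1:ℝ)-η)) ^ (-p) = δ^(-p) * (2:ℝ)^((1+η)*p) := by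
        rw [Real.mul_rpow hδpos.le (by positivity),
          ← Real.rpow_mul (by norm_num : (0:ℝ) ≤ 2),
          show (-(1:ℝ)-η)*(-p) = (1+η)*p by ring]
      rwa [hsplit] at hstep
    · have hM1 : (1:ℤ) ≤ max j (-1-j) := hM
      have hW : W j = ((max j (-1-j) : ℤ):ℝ) ^ (-2:ℝ) := by
        unfold W
        rw [max_eq_right hM1]
      have hMR : (1:ℝ) ≤ ((max j (-1-j) : ℤ):ℝ) := by exact_mod_cast hM1
      have hMpos : (0:ℝ) < ((max j (-1-j) : ℤ):ℝ) := by linarith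
      have hbase : 0 < ((max j (-1-j) : ℤ):ℝ) * δ := mul_pos hMpos hδpos
      have hstep : |g k| ^ (-p) ≤ (((max j (-1-j) : ℤ):ℝ) * δ) ^ (-p) :=
        Real.rpow_le_rpow_of_nonpos hbase hlow2 (by linarith)
      have hsplit : (((max j (-1-j):ℤ):ℝ) * δ) ^ (-p)
          = ((max j (-1-j):ℤ):ℝ)^(-p) * δ^(-p) :=
        Real.mul_rpow hMpos.le hδpos.le
      have hmono : ((max j (-1-j):ℤ):ℝ)^(-p) ≤ ((max j (-1-j):ℤ):ℝ)^(-2:ℝ) :=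
        Real.rpow_le_rpow_of_exponent_le hMR (by linarith)
      rw [hW]
      have hXn : (0:ℝ) ≤ ((max j (-1-j):ℤ):ℝ)^(-2:ℝ) := Real.rpow_nonneg hMpos.le _
      have hDn : (0:ℝ) ≤ δ^(-p) := Real.rpow_nonneg hδpos.le _
      calc |g k| ^ (-p) ≤ ((max j (-1-j):ℤ):ℝ)^(-p) * δ^(-p) := by
            rw [← hsplit]; exact hstep
        _ ≤ ((max j (-1-j):ℤ):ℝ)^(-2:ℝ) * δ^(-p) :=
            mul_le_mul_of_nonneg_right hmono hDn
        _ ≤ δ^(-p) * (2:ℝ)^((1+η)*p) * ((max j (-1-j):ℤ):ℝ)^(-2:ℝ) := by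
            nlinarith [mul_nonneg hDn hXn]
  -- assemble the sum
  have hsum1 : ∑ k ∈ s, |g k| ^ (-p) ≤ δ^(-p) * (2:ℝ)^((1+η)*p) * K := by
    calc ∑ k ∈ s, |g k| ^ (-p)
        ≤ ∑ k ∈ s, δ^(-p) * (2:ℝ)^((1+η)*p) * W ⌊g k / δ⌋ := Finset.sum_le_sum hterm
      _ = δ^(-p) * (2:ℝ)^((1+η)*p) * ∑ k ∈ s, W ⌊g k / δ⌋ := by rw [← Finset.mul_sum]
      _ = δ^(-p) * (2:ℝ)^((1+η)*p) * ∑ jj ∈ s.image (fun k => ⌊g k / δ⌋), W jj := by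
          rw [Finset.sum_image hinj]
      _ ≤ δ^(-p) * (2:ℝ)^((1+η)*p) * K := by
          have hpos : (0:ℝ) ≤ δ^(-p) * (2:ℝ)^((1+η)*p) := by positivity
          exact mul_le_mul_of_nonneg_left (hKb _) hpos
  have hδp : δ^(-p) = c^(-p) * (2:ℝ)^((N:ℝ)*((1+η)*p)) := by
    rw [hδ, Real.mul_rpow hc.le (Real.rpow_nonneg h2N.le _)]
    congr 1
    rw [← Real.rpow_natCast (2:ℝ) N, ← Real.rpow_mul (by norm_num : (0:ℝ) ≤ 2),
      ← Real.rpow_mul (by norm_num : (0:ℝ) ≤ 2)]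
    congr 1
    ring
  have h2e : (1:ℝ) ≤ (2:ℝ) ^ ((1+η)*p) := by
    have h := Real.rpow_le_rpow_of_exponent_le (by norm_num : (1:ℝ) ≤ 2)
      (by nlinarith : (0:ℝ) ≤ (1+η)*p)
    rwa [Real.rpow_zero] at h
  have harith : δ^(-p) * (2:ℝ)^((1+η)*p) * K
      ≤ 2 * (K/c)^p * (2:ℝ)^(p*((N:ℝ)+2)*(1+η)) := by
    rw [hδp]
    have hKp : K ≤ K^p := by
      have h := Real.rpow_le_rpow_of_exponent_le hK1 (by linarith : (1:ℝ) ≤ p)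
      rwa [Real.rpow_one] at h
    have hdiv : (K/c)^p = K^p * c^(-p) := by
      rw [Real.div_rpow hK0.le hc.le, Real.rpow_neg hc.le, div_eq_mul_inv]
    have hsplit2 : (2:ℝ)^(p*((N:ℝ)+2)*(1+η))
        = (2:ℝ)^((N:ℝ)*((1+η)*p)) * (2:ℝ)^((1+η)*p) * (2:ℝ)^((1+η)*p) := by
      rw [← Real.rpow_add (by norm_num : (0:ℝ) < 2),
        ← Real.rpow_add (by norm_num : (0:ℝ) < 2)]
      congr 1
      ring
    rw [hdiv, hsplit2]
    have hA : (0:ℝ) < (2:ℝ)^((N:ℝ)*((1+η)*p)) := Real.rpow_pos_of_pos (by norm_num) _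
    have hB : (0:ℝ) < (2:ℝ)^((1+η)*p) := lt_of_lt_of_le one_pos h2e
    have hcp : (0:ℝ) < c^(-p) := Real.rpow_pos_of_pos hc _
    have hKpB : K ≤ K^p * (2:ℝ)^((1+η)*p) := by
      calc K ≤ K^p := hKp
        _ ≤ K^p * (2:ℝ)^((1+η)*p) := le_mul_of_one_le_right (by positivity) h2e
    nlinarith [mul_nonneg (mul_nonneg (mul_nonneg hA.le hB.le) hcp.le)
      (show (0:ℝ) ≤ 2*(K^p * (2:ℝ)^((1+η)*p)) - K by linarith)]
  refine le_trans (le_of_eq ?_) (le_trans hsum1 harith)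
  rfl
end
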